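/- For a central division F-algebra D with involution *, ε ∈ F with ε·ε* = 1 such that ε ≠ -1 or *|_D ≠ id, and any positive integer n, the maps N ↦ F(N) := {A ∈ S_ε(M_n(D)) : xAx* ∈ N for all row vectors x ∈ Dⁿ} and M ↦ G(M) := {c ∈ S_ε(D) : c·E₁₁ ∈ M} are mutually inverse bijections between the set of ε-hermitian cones on D and the set of ε-hermitian cones on M_n(D) with the conjugate-transpose involution. -/

import Mathlib

open Matrix

/-- An involution on a ring: an additive, anti-multiplicative map of order at most 2. -/
def IsInvolution {R : Type*} [Ring R] (τ : R → R) : Prop :=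
  (∀ a b : R, τ (a + b) = τ a + τ b) ∧ (∀ a b : R, τ (a * b) = τ b * τ a) ∧
    (∀ a : R, τ (τ a) = a)

/-- An `ε`-hermitian cone on a ring `R` with involution `ι`: a set of `ε`-hermitian
elements closed under addition and under `a ↦ r a ι(r)`, with `M ∩ -M = {0}`. -/
def IsHermCone {R : Type*} [Ring R] (ι : R → R) (ε : R) (M : Set R) : Prop :=
  (∀ a ∈ M, ε * ι a = a) ∧ (∀ a ∈ M, ∀ b ∈ M, a + b ∈ M) ∧
    (∀ r : R, ∀ a ∈ M, r * a * ι r ∈ M) ∧ M ∩ (-M) = {0}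

/-- The conjugate-transpose involution on `Mₙ(D)` induced by an involution `σ` on `D`. -/
def matStar {D : Type*} [Ring D] {n : ℕ} (σ : D → D)
    (A : Matrix (Fin n) (Fin n) D) : Matrix (Fin n) (Fin n) D :=
  (Aᵀ).map σ

/-- The map `N ↦ F(N)` from `ε`-hermitian cones on `D` to `ε`-hermitian cones on `Mₙ(D)`. -/
def coneF {D : Type*} [Ring D] (σ : D → D) (ε : D) (n : ℕ) (N : Set D) :
    Set (Matrix (Fin n) (Fin n) D) :=
  {A | ε • matStar σ A = A ∧
    ∀ x : Fin n → D, (∑ i, ∑ j, x i * A i j * σ (x j)) ∈ N}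

/-- The map `M ↦ G(M)` from `ε`-hermitian cones on `Mₙ(D)` to `ε`-hermitian cones on `D`. -/
def coneG {D : Type*} [Ring D] (σ : D → D) (ε : D) {n : ℕ} (hn : 0 < n)
    (M : Set (Matrix (Fin n) (Fin n) D)) : Set D :=
  {c | ε * σ c = c ∧ Matrix.single (⟨0, hn⟩ : Fin n) ⟨0, hn⟩ c ∈ M}




section
variable {D : Type*} [DivisionRing D] {σ : D → D} (hσ : IsInvolution σ)
include hσ

lemma sig_zero : σ 0 = 0 := by
  have := hσ.1 0 0; simpa using this.symm

lemma sig_sig (a : D) : σ (σ a) = a := hσ.2.2 a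

lemma sig_hom : ∃ f : D →+ D, ⇑f = σ :=
  ⟨AddMonoidHom.mk' σ hσ.1, rfl⟩

lemma sig_one : σ 1 = 1 := by
  have h : σ (1 * σ 1) = σ (σ 1) := by rw [one_mul]
  rw [hσ.2.1, hσ.2.2] at h
  simpa using h

lemma sig_neg (a : D) : σ (-a) = - σ a := by
  have := hσ.1 a (-a)
  simp only [add_neg_cancel, sig_zero hσ] at this
  exact eq_neg_of_add_eq_zero_right this.symm

lemma sig_sum {ι : Type*} (s : Finset ι) (f : ι → D) : σ (∑ i ∈ s, f i) = ∑ i ∈ s, σ (f i) := by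
  obtain ⟨g, hg⟩ := sig_hom hσ
  rw [← hg, map_sum]

end

section
variable {D : Type*} [DivisionRing D] {σ : D → D} (hσ : IsInvolution σ) {n : ℕ}

lemma matStar_apply (A : Matrix (Fin n) (Fin n) D) (i j : Fin n) :
    matStar σ A i j = σ (A j i) := rfl

include hσ

lemma matStar_add (A B : Matrix (Fin n) (Fin n) D) :
    matStar σ (A + B) = matStar σ A + matStar σ B := by
  ext i j; simp [matStar_apply, hσ.1]

lemma matStar_mul (A B : Matrix (Fin n) (Fin n) D) :
    matStar σ (A * B) = matStar σ B * matStar σ A := by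
  ext i j
  simp only [matStar_apply, Matrix.mul_apply, sig_sum hσ, hσ.2.1]

lemma matStar_matStar (A : Matrix (Fin n) (Fin n) D) :
    matStar σ (matStar σ A) = A := by
  ext i j; simp [matStar_apply, sig_sig hσ]

lemma matStar_one : matStar σ (1 : Matrix (Fin n) (Fin n) D) = 1 := by
  ext i j
  simp only [matStar_apply, Matrix.one_apply]
  by_cases h : i = j <;> simp [h, eq_comm, sig_one hσ, sig_zero hσ]

lemma matStar_stdBasis (i j : Fin n) (c : D) :
    matStar σ (Matrix.single i j c) = Matrix.single j i (σ c) := by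
  ext a b
  simp only [matStar_apply, Matrix.single, Matrix.of_apply]
  by_cases h1 : i = b <;> by_cases h2 : j = a <;>
    simp [h1, h2, sig_zero hσ]

end

section
variable {D : Type*} [DivisionRing D] {n : ℕ}

lemma smul_one_mul_mat (ε : D) (A : Matrix (Fin n) (Fin n) D) :
    (ε • (1 : Matrix (Fin n) (Fin n) D)) * A = ε • A := by
  rw [Matrix.smul_mul, one_mul]

lemma smul_mat_apply (ε : D) (A : Matrix (Fin n) (Fin n) D) (i j : Fin n) :
    (ε • A) i j = ε * A i j := rfl

end




section
variable {D : Type*} [DivisionRing D] (σ : D → D) {n : ℕ}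

/-- congruence -/
def cg (R A : Matrix (Fin n) (Fin n) D) : Matrix (Fin n) (Fin n) D :=
  R * A * matStar σ R

/-- quadratic form values -/
def qf (A : Matrix (Fin n) (Fin n) D) (x : Fin n → D) : D :=
  ∑ i, ∑ j, x i * A i j * σ (x j)

variable {σ}

lemma cg_apply (R A : Matrix (Fin n) (Fin n) D) (i j : Fin n) :
    cg σ R A i j = ∑ s, ∑ t, R i s * A s t * σ (R j t) := by
  simp only [cg, Matrix.mul_apply, matStar_apply, Finset.sum_mul]
  rw [Finset.sum_comm]

variable (hσ : IsInvolution σ)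
include hσ

lemma cg_cg (R Q A : Matrix (Fin n) (Fin n) D) :
    cg σ R (cg σ Q A) = cg σ (R * Q) A := by
  simp only [cg, matStar_mul hσ, Matrix.mul_assoc]

lemma cg_one (A : Matrix (Fin n) (Fin n) D) : cg σ 1 A = A := by
  simp [cg, matStar_one hσ]

omit hσ in
lemma sum4 {α : Type*} [AddCommMonoid α] (f : Fin n → Fin n → Fin n → Fin n → α) :
    ∑ s, ∑ t, ∑ i, ∑ j, f s t i j = ∑ i, ∑ j, ∑ s, ∑ t, f s t i j := by
  have e1 : ∑ p : Fin n × Fin n, ∑ q : Fin n × Fin n, f p.1 p.2 q.1 q.2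
      = ∑ s, ∑ t, ∑ i, ∑ j, f s t i j := by
    calc ∑ p : Fin n × Fin n, ∑ q : Fin n × Fin n, f p.1 p.2 q.1 q.2
        = ∑ p : Fin n × Fin n, ∑ i, ∑ j, f p.1 p.2 i j :=
          Finset.sum_congr rfl fun p _ => Fintype.sum_prod_type' (f := fun i j => f p.1 p.2 i j)
      _ = ∑ s, ∑ t, ∑ i, ∑ j, f s t i j := Fintype.sum_prod_type' (f := fun s t => ∑ i, ∑ j, f s t i j)
  have e2 : ∑ q : Fin n × Fin n, ∑ p : Fin n × Fin n, f p.1 p.2 q.1 q.2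
      = ∑ i, ∑ j, ∑ s, ∑ t, f s t i j := by
    calc ∑ q : Fin n × Fin n, ∑ p : Fin n × Fin n, f p.1 p.2 q.1 q.2
        = ∑ q : Fin n × Fin n, ∑ s, ∑ t, f s t q.1 q.2 :=
          Finset.sum_congr rfl fun q _ => Fintype.sum_prod_type' (f := fun s t => f s t q.1 q.2)
      _ = ∑ i, ∑ j, ∑ s, ∑ t, f s t i j := Fintype.sum_prod_type' (f := fun i j => ∑ s, ∑ t, f s t i j)
  rw [← e1, ← e2, Finset.sum_comm]

lemma qf_cg (R A : Matrix (Fin n) (Fin n) D) (x : Fin n → D) :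
    qf σ (cg σ R A) x = qf σ A (fun t => ∑ s, x s * R s t) := by
  have lhs : qf σ (cg σ R A) x
      = ∑ i, ∑ j, ∑ s, ∑ t, x i * (R i s * A s t * σ (R j t)) * σ (x j) := by
    simp only [qf, cg_apply, Finset.sum_mul, Finset.mul_sum]
  have rhs : qf σ A (fun t => ∑ s, x s * R s t)
      = ∑ s, ∑ t, ∑ i, ∑ j, x i * (R i s * A s t * σ (R j t)) * σ (x j) := by
    simp only [qf, sig_sum hσ, hσ.2.1, Finset.sum_mul, Finset.mul_sum]
    refine Finset.sum_congr rfl fun s _ => Finset.sum_congr rfl fun t _ => ?_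
    rw [Finset.sum_comm]
    refine Finset.sum_congr rfl fun i _ => Finset.sum_congr rfl fun j _ => ?_
    simp [mul_assoc]
  rw [lhs, rhs, sum4]

end

section
variable {D : Type*} [DivisionRing D] {σ : D → D} {n : ℕ}

lemma sum_two {α : Type*} [AddCommMonoid α] {i j : Fin n} (hij : i ≠ j) (f : Fin n → α)
    (h : ∀ t, t ≠ i → t ≠ j → f t = 0) : ∑ t, f t = f i + f j := by
  rw [← Finset.sum_pair hij]
  refine (Finset.sum_subset (Finset.subset_univ _) fun t _ ht => ?_).symm
  simp only [Finset.mem_insert, Finset.mem_singleton, not_or] at ht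
  exact h t ht.1 ht.2

variable (hσ : IsInvolution σ)
include hσ

lemma qf_single (A : Matrix (Fin n) (Fin n) D) (i : Fin n) (c : D) :
    qf σ A (fun t => if t = i then c else 0) = c * A i i * σ c := by
  unfold qf
  rw [Finset.sum_eq_single i]
  · rw [Finset.sum_eq_single i]
    · simp
    · intro b _ hb; simp [hb, sig_zero hσ]
    · simp
  · intro b _ hb
    apply Finset.sum_eq_zero; intro t _; simp [hb]
  · simp

lemma qf_pair (A : Matrix (Fin n) (Fin n) D) {i j : Fin n} (hij : i ≠ j) (c d : D) :
    qf σ A (fun t => if t = i then c else if t = j then d else 0)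
      = c * A i i * σ c + c * A i j * σ d + (d * A j i * σ c + d * A j j * σ d) := by
  unfold qf
  set x : Fin n → D := fun t => if t = i then c else if t = j then d else 0 with hx
  have hx0 : ∀ t, t ≠ i → t ≠ j → x t = 0 := by intro t h1 h2; simp [hx, h1, h2]
  have inner : ∀ s, ∑ t, x s * A s t * σ (x t) = x s * A s i * σ c + x s * A s j * σ d := by
    intro s
    rw [sum_two hij]
    · simp [hx, Ne.symm hij]
    · intro t h1 h2; rw [hx0 t h1 h2, sig_zero hσ, mul_zero]
  rw [sum_two hij (f := fun s => ∑ t, x s * A s t * σ (x t))]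
  · rw [inner i, inner j]; simp [hx, Ne.symm hij]
  · intro s h1 h2
    rw [inner s, hx0 s h1 h2]; simp

lemma zero_of_qf_zero {ε : D} (hcase : ε ≠ -1 ∨ ∃ d : D, σ d ≠ d)
    (A : Matrix (Fin n) (Fin n) D) (hA : ε • matStar σ A = A)
    (hq : ∀ x, qf σ A x = 0) : A = 0 := by
  have herm : ∀ i j, ε * σ (A j i) = A i j := by
    intro i j
    have := congrFun (congrFun hA i) j
    simpa [Matrix.smul_apply, matStar_apply, smul_eq_mul] using this
  have diag : ∀ i, A i i = 0 := by
    intro i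
    have := hq (fun t => if t = i then (1:D) else 0)
    rw [qf_single hσ] at this
    simpa [sig_one hσ] using this
  ext i j
  simp only [Matrix.zero_apply]
  by_cases hij : i = j
  · subst hij; exact diag i
  · have key : ∀ c d : D, c * A i j * σ d + d * A j i * σ c = 0 := by
      intro c d
      have := hq (fun t => if t = i then c else if t = j then d else 0)
      rw [qf_pair hσ A hij c d] at this
      simpa [diag i, diag j] using this
    have e1 : A i j + A j i = 0 := by
      have := key 1 1; simpa [sig_one hσ] using this
    have hji : A j i = - A i j := eq_neg_of_add_eq_zero_right e1
    have e2 : ∀ d, A i j * σ d = d * A i j := by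
      intro d
      have h := key 1 d
      rw [one_mul, sig_one hσ, mul_one, hji, mul_neg] at h
      exact add_neg_eq_zero.mp h
    by_cases h0 : A i j = 0
    · exact h0
    · exfalso
      have comm : ∀ c d : D, c * d = d * c := by
        intro c d
        have h := key c d
        rw [hji, mul_neg, neg_mul] at h
        have h1 : c * (A i j * σ d) = d * (A i j * σ c) := by
          have h2 := add_neg_eq_zero.mp h
          rw [mul_assoc, mul_assoc] at h2; exact h2
        rw [e2 d, e2 c, ← mul_assoc, ← mul_assoc] at h1
        exact mul_right_cancel₀ h0 h1
      have sid : ∀ d, σ d = d := by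
        intro d
        have h := e2 d
        rw [comm d (A i j)] at h
        exact mul_left_cancel₀ h0 h
      rcases hcase with hε1 | ⟨d, hd⟩
      · have h2 : A i j = ε * -(A i j) := by
          calc A i j = ε * σ (A j i) := (herm i j).symm
            _ = ε * A j i := by rw [sid]
            _ = ε * -(A i j) := by rw [hji]
        rw [mul_neg] at h2
        have h3 : A i j + ε * A i j = 0 := eq_neg_iff_add_eq_zero.mp h2
        have h4 : (1 + ε) * A i j = 0 := by rw [add_mul, one_mul]; exact h3
        rcases mul_eq_zero.mp h4 with h | h
        · exact hε1 (eq_neg_of_add_eq_zero_right h)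
        · exact h0 h
      · exact hd (sid d)

end

section
variable {D : Type*} [DivisionRing D] {σ : D → D} {ε : D} {n : ℕ}
variable (hσ : IsInvolution σ)

lemma cone_zero_mem {R : Type*} [Ring R] {ι : R → R} {e : R} {M : Set R}
    (hM : IsHermCone ι e M) : (0 : R) ∈ M := by
  have : (0:R) ∈ M ∩ (-M) := by rw [hM.2.2.2]; exact rfl
  exact this.1

lemma cone_eq_zero {R : Type*} [Ring R] {ι : R → R} {e : R} {M : Set R}
    (hM : IsHermCone ι e M) {a : R} (h1 : a ∈ M) (h2 : -a ∈ M) : a = 0 := by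
  have : a ∈ M ∩ (-M) := ⟨h1, Set.mem_neg.mpr h2⟩
  rwa [hM.2.2.2] at this

lemma qf_def (A : Matrix (Fin n) (Fin n) D) (x : Fin n → D) :
    ∑ i, ∑ j, x i * A i j * σ (x j) = qf σ A x := rfl

lemma qf_add (A B : Matrix (Fin n) (Fin n) D) (x : Fin n → D) :
    qf σ (A + B) x = qf σ A x + qf σ B x := by
  simp [qf, Matrix.add_apply, mul_add, add_mul, Finset.sum_add_distrib]

lemma qf_neg (A : Matrix (Fin n) (Fin n) D) (x : Fin n → D) :
    qf σ (-A) x = - qf σ A x := by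
  simp [qf, Matrix.neg_apply, mul_neg, neg_mul, Finset.sum_neg_distrib]

lemma qf_zero_mat (x : Fin n → D) : qf σ (0 : Matrix (Fin n) (Fin n) D) x = 0 := by
  simp [qf]

include hσ

lemma matStar_zero : matStar σ (0 : Matrix (Fin n) (Fin n) D) = 0 := by
  ext i j; simp [matStar_apply, sig_zero hσ]

lemma mem_coneF {N : Set D} {A : Matrix (Fin n) (Fin n) D} :
    A ∈ coneF σ ε n N ↔ ε • matStar σ A = A ∧ ∀ x, qf σ A x ∈ N := Iff.rfl

lemma smul_mat_comm (hεcent : ε ∈ Set.center D) (R X : Matrix (Fin n) (Fin n) D) :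
    ε • (R * X) = R * (ε • X) := by
  have hc : ∀ g : D, g * ε = ε * g := fun g => (Semigroup.mem_center_iff.mp hεcent g)
  ext i j
  simp only [Matrix.smul_apply, Matrix.mul_apply, smul_eq_mul, Finset.mul_sum]
  refine Finset.sum_congr rfl fun s _ => ?_
  rw [← mul_assoc, ← hc, mul_assoc]

lemma coneF_cone (hεcent : ε ∈ Set.center D) (hcase : ε ≠ -1 ∨ ∃ d : D, σ d ≠ d)
    {N : Set D} (hN : IsHermCone σ ε N) :
    IsHermCone (matStar σ) (ε • (1 : Matrix (Fin n) (Fin n) D)) (coneF σ ε n N) := by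
  refine ⟨?_, ?_, ?_, ?_⟩
  · intro A hA; rw [smul_one_mul_mat]; exact hA.1
  · intro A hA B hB
    refine ⟨?_, fun x => ?_⟩
    · rw [matStar_add hσ, smul_add, hA.1, hB.1]
    · have h1 := hA.2 x
      have h2 := hB.2 x
      rw [qf_def] at h1 h2 ⊢
      rw [qf_add]
      exact hN.2.1 _ h1 _ h2
  · intro R A hA
    have hcg : R * A * matStar σ R = cg σ R A := rfl
    rw [hcg]
    refine ⟨?_, fun x => ?_⟩
    · show ε • matStar σ (R * A * matStar σ R) = _
      rw [matStar_mul hσ, matStar_mul hσ, matStar_matStar hσ, ← Matrix.mul_assoc,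
        Matrix.mul_assoc R, smul_mat_comm hσ hεcent]
      show R * (ε • (matStar σ A * matStar σ R)) = _
      rw [← Matrix.smul_mul, hA.1, cg, Matrix.mul_assoc]
    · rw [qf_def, qf_cg hσ]
      have := hA.2 (fun t => ∑ s, x s * R s t)
      rwa [qf_def] at this
  · ext A
    simp only [Set.mem_inter_iff, Set.mem_neg, Set.mem_singleton_iff]
    constructor
    · rintro ⟨h1, h2⟩
      refine zero_of_qf_zero hσ hcase A h1.1 fun x => ?_
      have p := h1.2 x
      have q := h2.2 x
      rw [qf_def] at p q
      rw [qf_neg] at q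
      exact cone_eq_zero hN p q
    · rintro rfl
      have h0 : (0 : Matrix (Fin n) (Fin n) D) ∈ coneF σ ε n N :=
        ⟨by rw [matStar_zero hσ, smul_zero], fun x => by rw [qf_def, qf_zero_mat]; exact cone_zero_mem hN⟩
      exact ⟨h0, by rwa [neg_zero]⟩

lemma qf_stdBasis (k : Fin n) (c : D) (x : Fin n → D) :
    qf σ (Matrix.single k k c) x = x k * c * σ (x k) := by
  unfold qf
  rw [Finset.sum_eq_single k]
  · rw [Finset.sum_eq_single k]
    · simp [Matrix.single, Matrix.of_apply]
    · intro b _ hb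
      simp [Matrix.single, Matrix.of_apply, (Ne.symm hb)]
    · simp
  · intro b _ hb
    apply Finset.sum_eq_zero; intro t _
    simp [Matrix.single, Matrix.of_apply, (Ne.symm hb)]
  · simp

lemma coneG_coneF {hn : 0 < n} {N : Set D} (hN : IsHermCone σ ε N) :
    coneG σ ε hn (coneF σ ε n N) = N := by
  ext c
  constructor
  · rintro ⟨hc1, hc2⟩
    have := hc2.2 (fun t => if t = (⟨0, hn⟩ : Fin n) then (1:D) else 0)
    rw [qf_def, qf_stdBasis hσ] at this
    simpa [sig_one hσ] using this
  · intro hc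
    refine ⟨hN.1 c hc, ?_, fun x => ?_⟩
    · rw [matStar_stdBasis hσ, Matrix.smul_single, smul_eq_mul, hN.1 c hc]
    · rw [qf_def, qf_stdBasis hσ]
      exact hN.2.2.1 _ _ hc

end

section
variable {D : Type*} [DivisionRing D] {σ : D → D} {ε : D} {n : ℕ}
variable (hσ : IsInvolution σ)
include hσ

lemma coneG_cone (hεcent : ε ∈ Set.center D) {hn : 0 < n}
    {M : Set (Matrix (Fin n) (Fin n) D)}
    (hM : IsHermCone (matStar σ) (ε • (1 : Matrix (Fin n) (Fin n) D)) M) :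
    IsHermCone σ ε (coneG σ ε hn M) := by
  have hc : ∀ g : D, g * ε = ε * g := fun g => (Semigroup.mem_center_iff.mp hεcent g)
  set k0 : Fin n := ⟨0, hn⟩
  refine ⟨fun c hc => hc.1, ?_, ?_, ?_⟩
  · intro a ha b hb
    refine ⟨?_, ?_⟩
    · rw [hσ.1, mul_add, ha.1, hb.1]
    · rw [Matrix.single_add]
      exact hM.2.1 _ ha.2 _ hb.2
  · intro r a ha
    refine ⟨?_, ?_⟩
    · have : σ (r * a * σ r) = r * (σ a * σ r) := by
        rw [hσ.2.1, hσ.2.1, hσ.2.2, ← mul_assoc]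
      rw [this, ← mul_assoc, ← hc r, mul_assoc, ← mul_assoc ε, ha.1, ← mul_assoc]
    · have h := hM.2.2.1 (Matrix.single k0 k0 r) _ ha.2
      rwa [matStar_stdBasis hσ, Matrix.single_mul_single_same,
        Matrix.single_mul_single_same] at h
  · ext c
    simp only [Set.mem_inter_iff, Set.mem_neg, Set.mem_singleton_iff]
    constructor
    · rintro ⟨h1, h2⟩
      have hneg : Matrix.single k0 k0 (-c) = -(Matrix.single k0 k0 c) := by
        ext i j
        simp only [Matrix.single, Matrix.of_apply, Matrix.neg_apply]
        split_ifs <;> simp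
      have h2' := h2.2
      rw [hneg] at h2'
      have := cone_eq_zero hM h1.2 h2'
      have := congrFun (congrFun this k0) k0
      simpa [k0] using this
    · rintro rfl
      have h0 : (0:D) ∈ coneG σ ε hn M :=
        ⟨by rw [sig_zero hσ, mul_zero], by rw [Matrix.single_zero]; exact cone_zero_mem hM⟩
      exact ⟨h0, by rwa [neg_zero]⟩

lemma mem_coneF_of_mem {hn : 0 < n} {M : Set (Matrix (Fin n) (Fin n) D)}
    (hM : IsHermCone (matStar σ) (ε • (1 : Matrix (Fin n) (Fin n) D)) M)
    {A : Matrix (Fin n) (Fin n) D} (hA : A ∈ M) :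
    A ∈ coneF σ ε n (coneG σ ε hn M) := by
  set k0 : Fin n := ⟨0, hn⟩
  have herm : ε • matStar σ A = A := by
    have := hM.1 A hA
    rwa [smul_one_mul_mat] at this
  refine ⟨herm, fun x => ?_⟩
  rw [qf_def]
  set R : Matrix (Fin n) (Fin n) D := Matrix.of fun i j => if i = k0 then x j else 0 with hR
  have hcg : cg σ R A = Matrix.single k0 k0 (qf σ A x) := by
    ext i j
    rw [cg_apply]
    by_cases hi : i = k0
    · by_cases hj : j = k0
      · subst hi; subst hj
        rw [Matrix.single_apply_same]
        refine Finset.sum_congr rfl fun s _ => Finset.sum_congr rfl fun t _ => ?_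
        simp [hR]
      · rw [Matrix.single_apply_of_ne _ _ _ _ _ (by simp [Ne.symm hj])]
        apply Finset.sum_eq_zero; intro s _
        apply Finset.sum_eq_zero; intro t _
        simp [hR, hj, sig_zero hσ]
    · rw [Matrix.single_apply_of_ne _ _ _ _ _ (by simp [Ne.symm hi])]
      apply Finset.sum_eq_zero; intro s _
      apply Finset.sum_eq_zero; intro t _
      simp [hR, hi]
  have hmem : Matrix.single k0 k0 (qf σ A x) ∈ M := by
    rw [← hcg]
    exact hM.2.2.1 R A hA
  refine ⟨?_, hmem⟩
  have := hM.1 _ hmem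
  rw [smul_one_mul_mat, matStar_stdBasis hσ, Matrix.smul_single] at this
  have := congrFun (congrFun this k0) k0
  simpa using this

end

section
variable {D : Type*} [DivisionRing D] {σ : D → D} {ε : D} {n : ℕ}
variable (hσ : IsInvolution σ)
include hσ

lemma sig_sub (a b : D) : σ (a - b) = σ a - σ b := by
  rw [sub_eq_add_neg, hσ.1, sig_neg hσ, sub_eq_add_neg]

lemma matStar_sub (A B : Matrix (Fin n) (Fin n) D) :
    matStar σ (A - B) = matStar σ A - matStar σ B := by
  ext i j; simp [matStar_apply, Matrix.sub_apply, sig_sub hσ]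

lemma key_lemma (hεcent : ε ∈ Set.center D) (hε : ε * σ ε = 1)
    (hcase : ε ≠ -1 ∨ ∃ d : D, σ d ≠ d) {hn : 0 < n}
    {M : Set (Matrix (Fin n) (Fin n) D)}
    (hM : IsHermCone (matStar σ) (ε • (1 : Matrix (Fin n) (Fin n) D)) M) :
    ∀ m k : ℕ, n ≤ k + m → ∀ A ∈ coneF σ ε n (coneG σ ε hn M),
      (∀ i j : Fin n, (i.1 < k ∨ j.1 < k) → A i j = 0) → A ∈ M := by
  have hC : IsHermCone (matStar σ) (ε • (1 : Matrix (Fin n) (Fin n) D))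
      (coneF σ ε n (coneG σ ε hn M)) :=
    coneF_cone hσ hεcent hcase (coneG_cone hσ hεcent hM)
  set C := coneF σ ε n (coneG σ ε hn M) with hCdef
  have hCcg : ∀ R A, A ∈ C → cg σ R A ∈ C := fun R A hA => hC.2.2.1 R A hA
  have hεne : ε ≠ 0 := left_ne_zero_of_mul_eq_one hε
  intro m
  induction m with
  | zero =>
    intro k hk A hA hsup
    have hA0 : A = 0 := by
      ext i j
      rw [hsup i j (Or.inl (lt_of_lt_of_le i.2 (by omega)))]; rfl
    rw [hA0]; exact cone_zero_mem hM
  | succ m ih =>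
    intro k hk A hA hsup
    by_cases hkn : n ≤ k
    · have hA0 : A = 0 := by
        ext i j
        rw [hsup i j (Or.inl (lt_of_lt_of_le i.2 hkn))]; rfl
      rw [hA0]; exact cone_zero_mem hM
    push_neg at hkn
    by_cases hq0 : ∀ x, qf σ A x = 0
    · have hA0 : A = 0 := zero_of_qf_zero hσ hcase A hA.1 hq0
      rw [hA0]; exact cone_zero_mem hM
    push_neg at hq0
    obtain ⟨x, hx⟩ := hq0
    set κ : Fin n := ⟨k, hkn⟩ with hκ
    set x' : Fin n → D := fun i => if k ≤ i.1 then x i else 0 with hx'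
    have hq' : qf σ A x' = qf σ A x := by
      unfold qf
      refine Finset.sum_congr rfl fun i _ => Finset.sum_congr rfl fun j _ => ?_
      by_cases hi : k ≤ i.1
      · by_cases hj : k ≤ j.1
        · simp [hx', hi, hj]
        · rw [hsup i j (Or.inr (by omega))]; simp
      · rw [hsup i j (Or.inl (by omega))]; simp
    have hd : qf σ A x' ≠ 0 := by rw [hq']; exact hx
    have hex : ∃ m0 : Fin n, x' m0 ≠ 0 := by
      by_contra h
      push_neg at h
      apply hd
      unfold qf
      apply Finset.sum_eq_zero; intro i _
      apply Finset.sum_eq_zero; intro j _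
      rw [h i]; simp
    obtain ⟨m0, hm0⟩ := hex
    have hkm0 : k ≤ m0.1 := by
      by_contra h
      apply hm0; simp only [hx']
      rw [if_neg h]
    -- swap κ and m0
    set e : Equiv.Perm (Fin n) := Equiv.swap κ m0 with he
    set S : Matrix (Fin n) (Fin n) D := Matrix.of fun i j => if e i = j then 1 else 0 with hS
    have hSstar : matStar σ S = S := by
      ext i j
      simp only [matStar_apply, hS, Matrix.of_apply]
      have hiff : e j = i ↔ e i = j := by
        constructor
        · intro h; rw [← h, he, Equiv.swap_apply_self]
        · intro h; rw [← h, he, Equiv.swap_apply_self]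
      by_cases h : e i = j
      · rw [if_pos (hiff.mpr h), if_pos h, sig_one hσ]
      · rw [if_neg (fun hh => h (hiff.mp hh)), if_neg h, sig_zero hσ]
    have hSS : S * S = 1 := by
      ext i j
      rw [Matrix.mul_apply, Finset.sum_eq_single (e i)]
      · simp [hS, he, Equiv.swap_apply_self, Matrix.one_apply, eq_comm]
      · intro b _ hb; simp [hS, Ne.symm hb]
      · simp
    set A1 : Matrix (Fin n) (Fin n) D := cg σ S A with hA1
    have hA1mem : A1 ∈ C := hCcg S A hA
    have hA1ap : ∀ i j, A1 i j = A (e i) (e j) := by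
      intro i j
      rw [hA1, cg_apply, Finset.sum_eq_single (e i)]
      · rw [Finset.sum_eq_single (e j)]
        · simp [hS, sig_one hσ]
        · intro t _ ht; simp [hS, Ne.symm ht, sig_zero hσ]
        · simp
      · intro s _ hs
        apply Finset.sum_eq_zero; intro t _
        simp [hS, Ne.symm hs]
      · simp
    have hκm : κ.1 = k := rfl
    have hA1sup : ∀ i j : Fin n, (i.1 < k ∨ j.1 < k) → A1 i j = 0 := by
      intro i j hij
      rw [hA1ap]
      have hfix : ∀ t : Fin n, t.1 < k → e t = t := by
        intro t ht
        refine Equiv.swap_apply_of_ne_of_ne ?_ ?_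
        · intro hh; rw [hh] at ht; exact lt_irrefl _ ht
        · intro hh; rw [hh] at ht; omega
      rcases hij with h | h
      · rw [hfix i h]; exact hsup _ _ (Or.inl h)
      · rw [hfix j h]; exact hsup _ _ (Or.inr h)
    set y : Fin n → D := fun i => x' (e i) with hy
    have hyk : y κ ≠ 0 := by
      simp only [hy, he, Equiv.swap_apply_left]
      exact hm0
    have hqA1 : qf σ A1 y = qf σ A x' := by
      rw [hA1, qf_cg hσ]
      have hvec : (fun t => ∑ s, y s * S s t) = x' := by
        funext t
        rw [Finset.sum_eq_single (e t)]
        · simp [hy, hS, he, Equiv.swap_apply_self]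
        · intro s _ hs
          have : e s ≠ t := fun h => hs (by rw [← h, he, Equiv.swap_apply_self])
          simp [hS, this]
        · simp
      rw [hvec]
    set d := qf σ A1 y with hdd
    have hdne : d ≠ 0 := by rw [hqA1]; exact hd
    have hdmem : d ∈ coneG σ ε hn M := by
      have := hA1mem.2 y
      rwa [qf_def] at this
    -- P : move x' to row κ
    set P : Matrix (Fin n) (Fin n) D :=
      Matrix.of (fun i j => if i = κ then y j else if i = j then 1 else 0) with hP
    set Pi : Matrix (Fin n) (Fin n) D :=
      Matrix.of (fun i j => if i = κ then (if j = κ then (y κ)⁻¹ else -((y κ)⁻¹ * y j))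
        else if i = j then 1 else 0) with hPi
    have hPiP : Pi * P = 1 := by
      ext i j
      rw [Matrix.mul_apply]
      by_cases hi : i = κ
      · rw [hi]
        by_cases hj : j = κ
        · rw [hj, Finset.sum_eq_single κ]
          · simp [hPi, hP, inv_mul_cancel₀ hyk, Matrix.one_apply]
          · intro s _ hs
            simp [hPi, hP, hs]
          · simp
        · rw [sum_two (Ne.symm hj) (f := fun s => Pi κ s * P s j)]
          · have h1 : Pi κ κ = (y κ)⁻¹ := by simp [hPi]
            have h2 : P κ j = y j := by simp [hP]
            have h3 : Pi κ j = -((y κ)⁻¹ * y j) := by simp [hPi, hj]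
            have h4 : P j j = (1:D) := by simp [hP, hj]
            rw [h1, h2, h3, h4, Matrix.one_apply_ne (Ne.symm hj), mul_one]
            simp
          · intro t h1 h2
            simp [hPi, hP, h1, h2]
      · rw [Finset.sum_eq_single i]
        · simp [hPi, hP, hi, Matrix.one_apply]
        · intro s _ hs
          simp [hPi, hi, Ne.symm hs]
        · simp
    set B : Matrix (Fin n) (Fin n) D := cg σ P A1 with hB
    have hBmem : B ∈ C := hCcg P A1 hA1mem
    have hBrec : cg σ Pi B = A1 := by
      rw [hB, cg_cg hσ, hPiP, cg_one hσ]
    have hProw : ∀ i : Fin n, i ≠ κ → ∀ s : Fin n, P i s = if i = s then 1 else 0 := by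
      intro i hi s; simp [hP, hi]
    have hBsup : ∀ i j : Fin n, (i.1 < k ∨ j.1 < k) → B i j = 0 := by
      intro i j hij
      rw [hB, cg_apply]
      rcases hij with h | h
      · have hiκ : i ≠ κ := by
          intro hh; rw [hh] at h; exact lt_irrefl _ h
        rw [Finset.sum_eq_single i]
        · apply Finset.sum_eq_zero; intro t _
          rw [hA1sup i t (Or.inl h)]; simp
        · intro s _ hs
          apply Finset.sum_eq_zero; intro t _
          rw [hProw i hiκ s, if_neg (Ne.symm hs)]; simp
        · simp
      · have hjκ : j ≠ κ := by
          intro hh; rw [hh] at h; exact lt_irrefl _ h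
        apply Finset.sum_eq_zero; intro s _
        rw [Finset.sum_eq_single j]
        · rw [hA1sup s j (Or.inr h)]; simp
        · intro t _ ht
          rw [hProw j hjκ t, if_neg (Ne.symm ht), sig_zero hσ]; simp
        · simp
    have hBκκ : B κ κ = d := by
      rw [hB, cg_apply, hdd]
      unfold qf
      refine Finset.sum_congr rfl fun s _ => Finset.sum_congr rfl fun t _ => ?_
      simp [hP]
    have hBherm : ∀ i j, B i j = ε * σ (B j i) := by
      intro i j
      have := congrFun (congrFun hBmem.1 i) j
      simp only [Matrix.smul_apply, matStar_apply, smul_eq_mul] at this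
      exact this.symm
    have hεσd : ε * σ d = d := hdmem.1
    -- the Q matrices
    set Q : Matrix (Fin n) (Fin n) D :=
      Matrix.of (fun i j => if i = j then 1 else if j = κ ∧ k < i.1 then -(B i κ * d⁻¹) else 0)
        with hQ
    set Qi : Matrix (Fin n) (Fin n) D :=
      Matrix.of (fun i j => if i = j then 1 else if j = κ ∧ k < i.1 then B i κ * d⁻¹ else 0)
        with hQi
    have hQκrow : ∀ t : Fin n, Q κ t = if κ = t then 1 else 0 := by
      intro t
      simp only [hQ, Matrix.of_apply]
      by_cases h : κ = t
      · rw [if_pos h, if_pos h]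
      · rw [if_neg h, if_neg h]
        rw [if_neg]
        rintro ⟨h1, h2⟩
        exact lt_irrefl k h2
    have hQrow : ∀ i : Fin n, ¬ (k < i.1) → ∀ s : Fin n, Q i s = if i = s then 1 else 0 := by
      intro i hi s
      simp only [hQ, Matrix.of_apply]
      by_cases h : i = s
      · rw [if_pos h, if_pos h]
      · rw [if_neg h, if_neg h, if_neg]
        rintro ⟨h1, h2⟩
        exact hi h2
    have hQiQ : Qi * Q = 1 := by
      ext i j
      rw [Matrix.mul_apply]
      by_cases hik : k < i.1
      · have hiκ : i ≠ κ := by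
          intro hh; rw [hh] at hik; exact lt_irrefl _ hik
        rw [sum_two hiκ (f := fun s => Qi i s * Q s j)]
        · have h1 : Qi i i = (1:D) := by simp [hQi]
          have h2 : Qi i κ = B i κ * d⁻¹ := by simp [hQi, hiκ, hik]
          rw [h1, h2, one_mul, hQκrow j]
          by_cases hj : j = κ
          · rw [hj, if_pos rfl, mul_one]
            have h3 : Q i κ = -(B i κ * d⁻¹) := by simp [hQ, hiκ, hik]
            rw [h3, Matrix.one_apply_ne hiκ]
            exact neg_add_cancel _
          · rw [if_neg (fun hh => hj hh.symm), mul_zero, add_zero]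
            have h3 : Q i j = if i = j then 1 else 0 := by
              simp only [hQ, Matrix.of_apply]
              by_cases h : i = j
              · rw [if_pos h, if_pos h]
              · rw [if_neg h, if_neg h, if_neg]
                rintro ⟨hh1, hh2⟩
                exact hj hh1
            rw [h3, Matrix.one_apply]
        · intro t h1 h2
          have : Qi i t = 0 := by
            simp only [hQi, Matrix.of_apply]
            rw [if_neg (fun hh => h1 hh.symm), if_neg]
            rintro ⟨hh1, hh2⟩
            exact h2 hh1
          rw [this, zero_mul]
      · rw [Finset.sum_eq_single i]
        · have : Qi i i = (1:D) := by simp [hQi]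
          rw [this, one_mul, hQrow i hik j, Matrix.one_apply]
        · intro s _ hs
          have : Qi i s = 0 := by
            simp only [hQi, Matrix.of_apply]
            rw [if_neg (Ne.symm hs), if_neg]
            rintro ⟨h1, h2⟩
            exact hik h2
          rw [this, zero_mul]
        · simp
    -- B' : clear row and column κ
    set B' : Matrix (Fin n) (Fin n) D := cg σ Q B with hB'def
    have hB'mem : B' ∈ C := hCcg Q B hBmem
    have hB'κκ : B' κ κ = d := by
      rw [hB'def, cg_apply, Finset.sum_eq_single κ]
      · rw [Finset.sum_eq_single κ]
        · rw [hQκrow κ, if_pos rfl, one_mul, sig_one hσ, mul_one, hBκκ]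
        · intro t _ ht
          rw [hQκrow t, if_neg (Ne.symm ht), sig_zero hσ, mul_zero]
        · simp
      · intro s _ hs
        apply Finset.sum_eq_zero; intro t _
        rw [hQκrow s, if_neg (Ne.symm hs), zero_mul, zero_mul]
      · simp
    have hB'colκ : ∀ i : Fin n, k < i.1 → B' i κ = 0 := by
      intro i hik
      have hiκ : i ≠ κ := by
        intro hh; rw [hh] at hik; exact lt_irrefl _ hik
      rw [hB'def, cg_apply]
      have inner : ∀ s, ∑ t, Q i s * B s t * σ (Q κ t) = Q i s * B s κ := by
        intro s
        rw [Finset.sum_eq_single κ]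
        · rw [hQκrow κ, if_pos rfl, sig_one hσ, mul_one]
        · intro t _ ht
          rw [hQκrow t, if_neg (Ne.symm ht), sig_zero hσ, mul_zero]
        · simp
      calc (∑ s, ∑ t, Q i s * B s t * σ (Q κ t)) = ∑ s, Q i s * B s κ :=
            Finset.sum_congr rfl fun s _ => inner s
        _ = Q i i * B i κ + Q i κ * B κ κ := by
            rw [sum_two hiκ (f := fun s => Q i s * B s κ)]
            intro t h1 h2
            have : Q i t = 0 := by
              simp only [hQ, Matrix.of_apply]
              rw [if_neg (fun hh => h1 hh.symm), if_neg]
              rintro ⟨hh1, hh2⟩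
              exact h2 hh1
            rw [this, zero_mul]
        _ = 0 := by
            have h1 : Q i i = (1:D) := by simp [hQ]
            have h2 : Q i κ = -(B i κ * d⁻¹) := by simp [hQ, hiκ, hik]
            rw [h1, h2, one_mul, hBκκ, neg_mul, mul_assoc, inv_mul_cancel₀ hdne, mul_one]
            exact add_neg_cancel _
    have hB'herm : ∀ i j, B' i j = ε * σ (B' j i) := by
      intro i j
      have := congrFun (congrFun hB'mem.1 i) j
      simp only [Matrix.smul_apply, matStar_apply, smul_eq_mul] at this
      exact this.symm
    have hB'rowκ : ∀ j : Fin n, k < j.1 → B' κ j = 0 := by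
      intro j hj
      rw [hB'herm κ j, hB'colκ j hj, sig_zero hσ, mul_zero]
    have hB'sup : ∀ i j : Fin n, (i.1 < k ∨ j.1 < k) → B' i j = 0 := by
      intro i j hij
      rw [hB'def, cg_apply]
      rcases hij with h | h
      · have hik : ¬ (k < i.1) := by omega
        rw [Finset.sum_eq_single i]
        · apply Finset.sum_eq_zero; intro t _
          rw [hBsup i t (Or.inl h)]; simp
        · intro s _ hs
          apply Finset.sum_eq_zero; intro t _
          rw [hQrow i hik s, if_neg (Ne.symm hs), zero_mul, zero_mul]
        · simp
      · have hjk : ¬ (k < j.1) := by omega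
        apply Finset.sum_eq_zero; intro s _
        rw [Finset.sum_eq_single j]
        · rw [hBsup s j (Or.inr h)]; simp
        · intro t _ ht
          rw [hQrow j hjk t, if_neg (Ne.symm ht), sig_zero hσ, mul_zero]
        · simp
    -- B''
    set B'' : Matrix (Fin n) (Fin n) D := B' - Matrix.single κ κ d with hB''def
    have hκj : ∀ j : Fin n, j ≠ κ → Matrix.single κ κ d κ j = 0 := by
      intro j hj
      exact Matrix.single_apply_of_ne _ _ _ _ _ (fun hh => hj hh.2.symm)
    have hiκ0 : ∀ i : Fin n, i ≠ κ → ∀ j, Matrix.single κ κ d i j = 0 := by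
      intro i hi j
      exact Matrix.single_apply_of_ne _ _ _ _ _ (fun hh => hi hh.1.symm)
    have hB''sup : ∀ i j : Fin n, (i.1 < k + 1 ∨ j.1 < k + 1) → B'' i j = 0 := by
      intro i j h
      rw [hB''def, Matrix.sub_apply]
      rcases h with h | h
      · by_cases hik : i.1 < k
        · have hi : i ≠ κ := by intro hh; rw [hh] at hik; exact lt_irrefl _ hik
          rw [hB'sup i j (Or.inl hik), hiκ0 i hi j, sub_zero]
        · have hi : i = κ := by
            apply Fin.ext; simp only [hκ]; omega
          rw [hi]
          by_cases hjk : j.1 < k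
          · have hj : j ≠ κ := by intro hh; rw [hh] at hjk; exact lt_irrefl _ hjk
            rw [hB'sup κ j (Or.inr hjk), hκj j hj, sub_zero]
          · by_cases hjκ : j = κ
            · rw [hjκ, hB'κκ, Matrix.single_apply_same, sub_self]
            · have hkj : k < j.1 := by
                rcases Nat.lt_or_ge k j.1 with hh | hh
                · exact hh
                · exfalso; apply hjκ; apply Fin.ext; simp only [hκ]; omega
              rw [hB'rowκ j hkj, hκj j hjκ, sub_zero]
      · by_cases hjk : j.1 < k
        · have hj : j ≠ κ := by intro hh; rw [hh] at hjk; exact lt_irrefl _ hjk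
          rw [hB'sup i j (Or.inr hjk)]
          rw [Matrix.single_apply_of_ne _ _ _ _ _ (fun hh => hj hh.2.symm), sub_zero]
        · have hj : j = κ := by apply Fin.ext; simp only [hκ]; omega
          rw [hj]
          by_cases hiκ : i = κ
          · rw [hiκ, hB'κκ, Matrix.single_apply_same, sub_self]
          · by_cases hik : i.1 < k
            · rw [hB'sup i κ (Or.inl hik), hiκ0 i hiκ κ, sub_zero]
            · have hki : k < i.1 := by
                rcases Nat.lt_or_ge k i.1 with hh | hh
                · exact hh
                · exfalso; apply hiκ; apply Fin.ext; simp only [hκ]; omega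
              rw [hB'colκ i hki, hiκ0 i hiκ κ, sub_zero]
    have hstdherm : ε • matStar σ (Matrix.single κ κ d) = Matrix.single κ κ d := by
      rw [matStar_stdBasis hσ, Matrix.smul_single, smul_eq_mul, hεσd]
    have hB''mem : B'' ∈ C := by
      refine ⟨?_, fun x0 => ?_⟩
      · rw [hB''def, matStar_sub hσ, smul_sub, hB'mem.1, hstdherm]
      · rw [qf_def]
        set xt : Fin n → D := fun t => if t = κ then 0 else x0 t with hxt
        have hqeq : qf σ B'' x0 = qf σ B' xt := by
          unfold qf
          refine Finset.sum_congr rfl fun i _ => Finset.sum_congr rfl fun j _ => ?_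
          by_cases hi : i = κ
          · rw [hi, hB''sup κ j (Or.inl (Nat.lt_succ_self k))]
            simp [hxt]
          · by_cases hj : j = κ
            · rw [hj, hB''sup i κ (Or.inr (Nat.lt_succ_self k))]
              simp [hxt, sig_zero hσ]
            · have : B'' i j = B' i j := by
                rw [hB''def, Matrix.sub_apply, hiκ0 i hi j, sub_zero]
              rw [this]
              simp [hxt, hi, hj]
        rw [hqeq]
        have := hB'mem.2 xt
        rwa [qf_def] at this
    have hB''M : B'' ∈ M := ih (k + 1) (by omega) B'' hB''mem hB''sup
    have hEdM : Matrix.single κ κ d ∈ M := by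
      have h1 : Matrix.single (⟨0, hn⟩ : Fin n) ⟨0, hn⟩ d ∈ M := hdmem.2
      have h2 := hM.2.2.1 (Matrix.single κ (⟨0, hn⟩ : Fin n) 1) _ h1
      rwa [matStar_stdBasis hσ, sig_one hσ, Matrix.single_mul_single_same,
        Matrix.single_mul_single_same, one_mul, mul_one] at h2
    have hB'M : B' ∈ M := by
      have h := hM.2.1 B'' hB''M _ hEdM
      rwa [hB''def, sub_add_cancel] at h
    have hBM : B ∈ M := by
      have h : cg σ Qi B' ∈ M := hM.2.2.1 Qi B' hB'M
      rwa [hB'def, cg_cg hσ, hQiQ, cg_one hσ] at h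
    have hA1M : A1 ∈ M := by
      have h : cg σ Pi B ∈ M := hM.2.2.1 Pi B hBM
      rwa [hBrec] at h
    have h : cg σ S A1 ∈ M := hM.2.2.1 S A1 hA1M
    rwa [hA1, cg_cg hσ, hSS, cg_one hσ] at h

lemma coneF_coneG (hεcent : ε ∈ Set.center D) (hε : ε * σ ε = 1)
    (hcase : ε ≠ -1 ∨ ∃ d : D, σ d ≠ d) {hn : 0 < n}
    {M : Set (Matrix (Fin n) (Fin n) D)}
    (hM : IsHermCone (matStar σ) (ε • (1 : Matrix (Fin n) (Fin n) D)) M) :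
    coneF σ ε n (coneG σ ε hn M) = M := by
  ext A
  constructor
  · intro hA
    exact key_lemma hσ hεcent hε hcase hM n 0 (by omega) A hA
      (fun i j hij => absurd hij (by omega))
  · intro hA
    exact mem_coneF_of_mem hσ hM hA

end

/-- For a central division algebra `D` with involution `σ` and central `ε` with
`ε σ(ε) = 1`, if `ε ≠ -1` or `σ ≠ id`, then `F` and `G` are mutually inverse bijections
between `ε`-hermitian cones on `D` and `ε`-hermitian cones on `Mₙ(D)` with the
conjugate-transpose involution. -/
theorem stmt_5 {D : Type*} [DivisionRing D]
    (σ : D → D) (hσ : IsInvolution σ) (ε : D)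
    (hεcent : ε ∈ Set.center D) (hε : ε * σ ε = 1)
    (hcase : ε ≠ -1 ∨ ∃ d : D, σ d ≠ d)
    (n : ℕ) (hn : 0 < n) :
    (∀ N : Set D, IsHermCone σ ε N →
        IsHermCone (matStar σ) (ε • (1 : Matrix (Fin n) (Fin n) D)) (coneF σ ε n N) ∧
        coneG σ ε hn (coneF σ ε n N) = N) ∧
    (∀ M : Set (Matrix (Fin n) (Fin n) D),
        IsHermCone (matStar σ) (ε • (1 : Matrix (Fin n) (Fin n) D)) M →
        IsHermCone σ ε (coneG σ ε hn M) ∧ coneF σ ε n (coneG σ ε hn M) = M) := by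
  constructor
  · intro N hN
    exact ⟨coneF_cone hσ hεcent hcase hN, coneG_coneF hσ hN⟩
  · intro M hM
    exact ⟨coneG_cone hσ hεcent hM, coneF_coneG hσ hεcent hε hcase hM⟩
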